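/- If a is a bounded operator on H commuting with U* (U*a = aU*, i.e. a is weakly antiholomorphic), then a is automatically scalable: there exists a bounded operator b on H with a∘j = j∘b. -/

import Mathlib

open MeasureTheory InnerProductSpace
open scoped ENNReal NNReal

noncomputable section

/-- `H = ℓ²(ℕ, ℂ)`. -/
abbrev H : Type := lp (fun _ : ℕ => ℂ) 2

/-- The standard orthonormal basis `e n` of `ℓ²(ℕ, ℂ)`. -/
noncomputable def e (n : ℕ) : H := lp.single 2 n 1

namespace Stmt17Aux

local notation "⟪" x ", " y "⟫" => @inner ℂ _ _ x y

lemma e_apply (n k : ℕ) : (e n : ∀ _ : ℕ, ℂ) k = if k = n then 1 else 0 := by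
  simp [e, lp.single_apply, Pi.single_apply]

lemma inner_e (m : ℕ) (x : H) : ⟪e m, x⟫ = x m := by
  simpa [e] using lp.inner_single_left (𝕜 := ℂ) m (1 : ℂ) x

lemma norm_e (n : ℕ) : ‖e n‖ = 1 := by
  have := lp.norm_single (p := 2) (E := fun _ : ℕ => ℂ) (by norm_num) n (1:ℂ)
  simpa [e] using this

/-- matrix entries of `a` -/
def c (a : H →L[ℂ] H) (m n : ℕ) : ℂ := a (e n) m

lemma norm_c_le (a : H →L[ℂ] H) (m n : ℕ) : ‖c a m n‖ ≤ ‖a‖ := by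
  calc ‖c a m n‖ ≤ ‖a (e n)‖ := lp.norm_apply_le_norm (by norm_num) (a (e n)) m
  _ ≤ ‖a‖ * ‖e n‖ := a.le_opNorm _
  _ = ‖a‖ := by rw [norm_e, mul_one]

end Stmt17Aux

namespace Stmt17Aux

variable {q : ℝ} {U : H →L[ℂ] H}

lemma Ustar_apply (hU : ∀ n : ℕ, U (e n) = (Real.sqrt (1 - q ^ (n + 1)) : ℂ) • e (n + 1))
    (x : H) (m : ℕ) :
    ((ContinuousLinearMap.adjoint U) x) m
      = (Real.sqrt (1 - q ^ (m + 1)) : ℂ) * x (m + 1) := by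
  rw [← inner_e m ((ContinuousLinearMap.adjoint U) x),
    ContinuousLinearMap.adjoint_inner_right, hU m, inner_smul_left, inner_e]
  simp

lemma Ustar_e0 (hU : ∀ n : ℕ, U (e n) = (Real.sqrt (1 - q ^ (n + 1)) : ℂ) • e (n + 1)) :
    (ContinuousLinearMap.adjoint U) (e 0) = 0 := by
  apply lp.ext
  funext m
  rw [Ustar_apply hU]
  simp [e_apply]

lemma Ustar_eS (hU : ∀ n : ℕ, U (e n) = (Real.sqrt (1 - q ^ (n + 1)) : ℂ) • e (n + 1)) (n : ℕ) :
    (ContinuousLinearMap.adjoint U) (e (n + 1))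
      = (Real.sqrt (1 - q ^ (n + 1)) : ℂ) • e n := by
  apply lp.ext
  funext m
  rw [Ustar_apply hU]
  rw [lp.coeFn_smul, Pi.smul_apply, e_apply, e_apply, smul_eq_mul]
  by_cases hm : m = n
  · subst hm; simp
  · simp [hm, fun h : m + 1 = n + 1 => hm (Nat.succ_injective h)]

variable {a : H →L[ℂ] H}

lemma key0 (hU : ∀ n : ℕ, U (e n) = (Real.sqrt (1 - q ^ (n + 1)) : ℂ) • e (n + 1))
    (ha : (ContinuousLinearMap.adjoint U).comp a = a.comp (ContinuousLinearMap.adjoint U))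
    (m : ℕ) : (Real.sqrt (1 - q ^ (m + 1)) : ℂ) * c a (m + 1) 0 = 0 := by
  have h := congrArg (fun T : H →L[ℂ] H => (T (e 0) : ∀ _ : ℕ, ℂ) m) ha
  simp only [ContinuousLinearMap.comp_apply] at h
  rw [Ustar_apply hU, Ustar_e0 hU] at h
  simpa [c] using h

lemma keyS (hU : ∀ n : ℕ, U (e n) = (Real.sqrt (1 - q ^ (n + 1)) : ℂ) • e (n + 1))
    (ha : (ContinuousLinearMap.adjoint U).comp a = a.comp (ContinuousLinearMap.adjoint U))
    (m n : ℕ) :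
    (Real.sqrt (1 - q ^ (m + 1)) : ℂ) * c a (m + 1) (n + 1)
      = (Real.sqrt (1 - q ^ (n + 1)) : ℂ) * c a m n := by
  have h := congrArg (fun T : H →L[ℂ] H => (T (e (n + 1)) : ∀ _ : ℕ, ℂ) m) ha
  simp only [ContinuousLinearMap.comp_apply] at h
  rw [Ustar_apply hU, Ustar_eS hU, _root_.map_smul, lp.coeFn_smul, Pi.smul_apply, smul_eq_mul] at h
  simpa [c] using h

lemma sqrt_ne (hq0 : 0 < q) (hq1 : q < 1) (m : ℕ) :
    (Real.sqrt (1 - q ^ (m + 1)) : ℂ) ≠ 0 := by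
  have : q ^ (m + 1) < 1 := pow_lt_one₀ hq0.le hq1 (Nat.succ_ne_zero m)
  simp only [ne_eq, Complex.ofReal_eq_zero, Real.sqrt_eq_zero', not_le, not_or]
  linarith

lemma tri (hq0 : 0 < q) (hq1 : q < 1)
    (hU : ∀ n : ℕ, U (e n) = (Real.sqrt (1 - q ^ (n + 1)) : ℂ) • e (n + 1))
    (ha : (ContinuousLinearMap.adjoint U).comp a = a.comp (ContinuousLinearMap.adjoint U)) :
    ∀ n m, n < m → c a m n = 0 := by
  intro n
  induction n with
  | zero =>
    intro m hm
    obtain ⟨m', rfl⟩ : ∃ m', m = m' + 1 := ⟨m - 1, by omega⟩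
    have := key0 hU ha m'
    exact (mul_eq_zero.1 this).resolve_left (sqrt_ne hq0 hq1 m')
  | succ n ih =>
    intro m hm
    obtain ⟨m', rfl⟩ : ∃ m', m = m' + 1 := ⟨m - 1, by omega⟩
    have h := keyS hU ha m' n
    rw [ih m' (by omega), mul_zero] at h
    exact (mul_eq_zero.1 h).resolve_left (sqrt_ne hq0 hq1 m')

end Stmt17Aux

namespace Stmt17Aux

lemma two_toReal : (2 : ℝ≥0∞).toReal = 2 := by norm_num

lemma memB (a : H →L[ℂ] H) (d : ℕ) (x : H) :
    Memℓp (fun k => c a k (k + d) * x (k + d)) 2 := by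
  apply memℓp_gen
  have hx : Summable fun n : ℕ => ‖x n‖ ^ (2 : ℝ≥0∞).toReal :=
    (lp.memℓp x).summable (by norm_num)
  have hx2 : Summable fun k : ℕ => ‖x (k + d)‖ ^ (2 : ℝ≥0∞).toReal :=
    hx.comp_injective (add_left_injective d)
  refine Summable.of_nonneg_of_le
    (fun k => Real.rpow_nonneg (norm_nonneg _) _) (fun k => ?_)
    (hx2.mul_left (‖a‖ ^ (2 : ℝ≥0∞).toReal))
  rw [norm_mul, Real.mul_rpow (norm_nonneg _) (norm_nonneg _)]
  exact mul_le_mul_of_nonneg_right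
    (Real.rpow_le_rpow (norm_nonneg _) (norm_c_le a _ _) (by norm_num))
    (Real.rpow_nonneg (norm_nonneg _) _)

/-- the `d`-th superdiagonal of `a`, as a linear map. -/
def Blm (a : H →L[ℂ] H) (d : ℕ) : H →ₗ[ℂ] H where
  toFun x := ⟨fun k => c a k (k + d) * x (k + d), memB a d x⟩
  map_add' x y := by
    apply lp.ext; funext k
    simp [mul_add]
    rfl
  map_smul' r x := by
    apply lp.ext; funext k
    simp [mul_comm, mul_left_comm]

lemma Blm_apply (a : H →L[ℂ] H) (d : ℕ) (x : H) (k : ℕ) :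
    (Blm a d x : ∀ _ : ℕ, ℂ) k = c a k (k + d) * x (k + d) := rfl

lemma Blm_norm (a : H →L[ℂ] H) (d : ℕ) (x : H) : ‖Blm a d x‖ ≤ ‖a‖ * ‖x‖ := by
  have h2 : (0:ℝ) < (2 : ℝ≥0∞).toReal := by norm_num
  have key : ‖Blm a d x‖ ^ (2 : ℝ≥0∞).toReal ≤ (‖a‖ * ‖x‖) ^ (2 : ℝ≥0∞).toReal := by
    rw [lp.norm_rpow_eq_tsum h2, Real.mul_rpow (norm_nonneg _) (norm_nonneg _),
      lp.norm_rpow_eq_tsum h2 x]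
    calc (∑' k : ℕ, ‖(Blm a d x : ∀ _ : ℕ, ℂ) k‖ ^ (2 : ℝ≥0∞).toReal)
        ≤ ∑' k : ℕ, ‖a‖ ^ (2 : ℝ≥0∞).toReal * ‖x (k + d)‖ ^ (2 : ℝ≥0∞).toReal := by
          refine Summable.tsum_le_tsum (fun k => ?_) ((lp.memℓp (Blm a d x)).summable h2)
            ((((lp.memℓp x).summable h2).comp_injective
              (add_left_injective d)).mul_left _)
          rw [Blm_apply, norm_mul, Real.mul_rpow (norm_nonneg _) (norm_nonneg _)]
          exact mul_le_mul_of_nonneg_right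
            (Real.rpow_le_rpow (norm_nonneg _) (norm_c_le a _ _) h2.le)
            (Real.rpow_nonneg (norm_nonneg _) _)
      _ = ‖a‖ ^ (2 : ℝ≥0∞).toReal * ∑' k : ℕ, ‖x (k + d)‖ ^ (2 : ℝ≥0∞).toReal := tsum_mul_left
      _ ≤ ‖a‖ ^ (2 : ℝ≥0∞).toReal * ∑' n : ℕ, ‖x n‖ ^ (2 : ℝ≥0∞).toReal := by
          refine mul_le_mul_of_nonneg_left ?_ (Real.rpow_nonneg (norm_nonneg _) _)
          refine Summable.tsum_le_tsum_of_inj (· + d) (add_left_injective d)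
              (fun n _ => Real.rpow_nonneg (norm_nonneg _) _) (fun k => le_rfl)
              (((lp.memℓp x).summable h2).comp_injective (add_left_injective d))
              ((lp.memℓp x).summable h2)
  rw [two_toReal] at key
  have := Real.sqrt_le_sqrt key
  rwa [Real.rpow_two, Real.rpow_two, Real.sqrt_sq (norm_nonneg _),
    Real.sqrt_sq (by positivity)] at this

end Stmt17Aux

namespace Stmt17Aux

/-- the `d`-th superdiagonal of `a`, as a continuous linear map. -/
def B (a : H →L[ℂ] H) (d : ℕ) : H →L[ℂ] H :=
  LinearMap.mkContinuous (Blm a d) ‖a‖ (Blm_norm a d)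

lemma B_norm_le (a : H →L[ℂ] H) (d : ℕ) : ‖B a d‖ ≤ ‖a‖ :=
  LinearMap.mkContinuous_norm_le _ (norm_nonneg a) _

lemma B_apply (a : H →L[ℂ] H) (d : ℕ) (x : H) (k : ℕ) :
    (B a d x : ∀ _ : ℕ, ℂ) k = c a k (k + d) * x (k + d) := rfl

lemma B_e_le (a : H →L[ℂ] H) {d n : ℕ} (hdn : d ≤ n) :
    B a d (e n) = c a (n - d) n • e (n - d) := by
  apply lp.ext
  funext k
  rw [B_apply, lp.coeFn_smul, Pi.smul_apply, e_apply, e_apply, smul_eq_mul]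
  by_cases hk : k = n - d
  · subst hk
    rw [if_pos (by omega), if_pos rfl, Nat.sub_add_cancel hdn]
  · rw [if_neg (fun h => hk (by omega)), if_neg hk]
    simp

lemma B_e_gt (a : H →L[ℂ] H) {d n : ℕ} (hdn : n < d) : B a d (e n) = 0 := by
  apply lp.ext
  funext k
  rw [B_apply, e_apply, if_neg (by omega)]
  simp

variable {q : ℝ}

lemma summB (hq0 : 0 < q) (hq1 : q < 1) (a : H →L[ℂ] H) :
    Summable (fun d : ℕ => ((q : ℂ) ^ d) • B a d) := by
  refine Summable.of_norm_bounded (g := fun d => ‖a‖ * q ^ d) ?_ ?_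
  · exact (summable_geometric_of_lt_one hq0.le hq1).mul_left ‖a‖
  · intro d
    have h0 : ‖((q : ℂ) ^ d) • B a d‖ ≤ ‖(q : ℂ) ^ d‖ * ‖B a d‖ := ContinuousLinearMap.opNorm_smul_le _ _
    have h1 : ‖(q : ℂ) ^ d‖ = q ^ d := by
      rw [norm_pow, Complex.norm_real, Real.norm_of_nonneg hq0.le]
    rw [h1] at h0
    refine h0.trans ?_
    rw [mul_comm]
    exact mul_le_mul_of_nonneg_right (B_norm_le a d) (by positivity)

/-- the scaled operator `b`. -/
def bop (hq0 : 0 < q) (hq1 : q < 1) (a : H →L[ℂ] H) : H →L[ℂ] H :=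
  ∑' d : ℕ, ((q : ℂ) ^ d) • B a d

lemma bop_apply (hq0 : 0 < q) (hq1 : q < 1) (a : H →L[ℂ] H) (x : H) :
    bop hq0 hq1 a x = ∑' d : ℕ, ((q : ℂ) ^ d) • B a d x := by
  unfold bop
  have h := ContinuousLinearMap.map_tsum (ContinuousLinearMap.apply ℂ H x) (summB hq0 hq1 a)
  simpa using h

lemma bop_e (hq0 : 0 < q) (hq1 : q < 1) (a : H →L[ℂ] H) (n : ℕ) :
    bop hq0 hq1 a (e n)
      = ∑ d ∈ Finset.range (n + 1), ((q : ℂ) ^ d * c a (n - d) n) • e (n - d) := by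
  rw [bop_apply]
  rw [tsum_eq_sum (s := Finset.range (n + 1))
    (fun d hd => by rw [B_e_gt a (by simpa using hd)]; simp)]
  refine Finset.sum_congr rfl fun d hd => ?_
  rw [B_e_le a (by simpa using Nat.lt_succ_iff.mp (Finset.mem_range.mp hd)), smul_smul]

end Stmt17Aux

namespace Stmt17Aux

lemma single_zero (m : ℕ) : lp.single 2 m (0 : ℂ) = (0 : H) := by
  apply lp.ext
  funext k
  rw [lp.single_apply]
  simp

lemma single_eq_smul (m : ℕ) (v : ℂ) : lp.single 2 m v = v • e m := by
  have h := lp.single_smul (E := fun _ : ℕ => ℂ) (𝕜 := ℂ) 2 m v (1 : ℂ)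
  rw [smul_eq_mul, mul_one] at h
  rw [e, ← h]

variable {q : ℝ} {U a : H →L[ℂ] H}

lemma a_e (hq0 : 0 < q) (hq1 : q < 1)
    (hU : ∀ n : ℕ, U (e n) = (Real.sqrt (1 - q ^ (n + 1)) : ℂ) • e (n + 1))
    (ha : (ContinuousLinearMap.adjoint U).comp a = a.comp (ContinuousLinearMap.adjoint U))
    (n : ℕ) :
    a (e n) = ∑ m ∈ Finset.range (n + 1), c a m n • e m := by
  have h : HasSum (fun m : ℕ => lp.single 2 m ((a (e n) : ∀ _ : ℕ, ℂ) m)) (a (e n)) :=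
    lp.hasSum_single ENNReal.ofNat_ne_top (a (e n))
  have h2 : a (e n) = ∑' m : ℕ, lp.single 2 m (c a m n) := h.tsum_eq.symm
  rw [h2, tsum_eq_sum (s := Finset.range (n + 1)) (fun m hm => by
    rw [show c a m n = 0 from tri hq0 hq1 hU ha n m (by simpa using hm), single_zero])]
  exact Finset.sum_congr rfl fun m _ => single_eq_smul m _

end Stmt17Aux


/-- A weakly antiholomorphic bounded operator (one commuting with `U*`) is
automatically scalable. -/
theorem stmt17 (q : ℝ) (hq0 : 0 < q) (hq1 : q < 1)
    (U : H →L[ℂ] H)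
    (hU : ∀ n : ℕ, U (e n) = (Real.sqrt (1 - q ^ (n + 1)) : ℂ) • e (n + 1))
    (j : H →L[ℂ] H)
    (hj : ∀ n : ℕ, j (e n) = ((q : ℂ) ^ n) • e n)
    (a : H →L[ℂ] H)
    (ha : (ContinuousLinearMap.adjoint U).comp a = a.comp (ContinuousLinearMap.adjoint U)) :
    ∃ b : H →L[ℂ] H, a.comp j = j.comp b := by

  classical
  refine ⟨Stmt17Aux.bop hq0 hq1 a, ?_⟩
  have he : ∀ n : ℕ, a (j (e n)) = j (Stmt17Aux.bop hq0 hq1 a (e n)) := by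
    intro n
    rw [hj n, _root_.map_smul, Stmt17Aux.a_e hq0 hq1 hU ha n, Stmt17Aux.bop_e hq0 hq1 a n, map_sum]
    have hterm : ∀ d ∈ Finset.range (n + 1),
        j (((q : ℂ) ^ d * Stmt17Aux.c a (n - d) n) • e (n - d))
          = ((q : ℂ) ^ n * Stmt17Aux.c a (n - d) n) • e (n - d) := by
      intro d hd
      rw [_root_.map_smul, hj (n - d), smul_smul]
      congr 1
      have hqd : (q : ℂ) ^ d * (q : ℂ) ^ (n - d) = (q : ℂ) ^ n := by
        rw [← pow_add]
        congr 1
        have := Finset.mem_range.mp hd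
        omega
      calc (q : ℂ) ^ d * Stmt17Aux.c a (n - d) n * (q : ℂ) ^ (n - d)
          = (q : ℂ) ^ d * (q : ℂ) ^ (n - d) * Stmt17Aux.c a (n - d) n := by ring
        _ = (q : ℂ) ^ n * Stmt17Aux.c a (n - d) n := by rw [hqd]
    rw [Finset.sum_congr rfl hterm, Finset.smul_sum]
    simp_rw [smul_smul]
    have hrefl := Finset.sum_range_reflect
      (fun m => ((q : ℂ) ^ n * Stmt17Aux.c a m n) • e m) (n + 1)
    simp only [Nat.add_sub_cancel] at hrefl
    exact hrefl.symm
  refine ContinuousLinearMap.ext fun x => ?_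
  have hs : HasSum (fun n : ℕ => lp.single 2 n ((x : ∀ _ : ℕ, ℂ) n)) x :=
    lp.hasSum_single ENNReal.ofNat_ne_top x
  have h1 := hs.mapL (a.comp j)
  have h2 := hs.mapL (j.comp (Stmt17Aux.bop hq0 hq1 a))
  have hfun : (fun n : ℕ => (a.comp j) (lp.single 2 n ((x : ∀ _ : ℕ, ℂ) n)))
      = fun n : ℕ => (j.comp (Stmt17Aux.bop hq0 hq1 a)) (lp.single 2 n ((x : ∀ _ : ℕ, ℂ) n)) := by
    funext n
    rw [Stmt17Aux.single_eq_smul, _root_.map_smul, _root_.map_smul]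
    simp only [ContinuousLinearMap.comp_apply]
    rw [he n]
  rw [hfun] at h1
  exact h1.unique h2

end
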